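/- With the sphere spectral data ν_{N,j} = (1/R²)[j(j+1)+(N/2)(2j+1)], m_{N,j}=N+2j+1, the coefficient of N^0 in the asymptotic expansion of Y_N(φ) = Σ_j m_{N,j} φ(ν_{N,j}/N) equals f_1(φ) = (1/R²) Σ_{j=0}^∞ φ'((2j+1)/(2R²)) j(j+1) + Σ_{j=0}^∞ φ((2j+1)/(2R²))(2j+1). -/

import Mathlib

open Real

lemma schwartz_decay_bound (f : SchwartzMap ℝ ℂ) (k : ℕ) :
    ∃ C : ℝ, 0 ≤ C ∧ ∀ x : ℝ, ‖f x‖ ≤ C / (1 + ‖x‖) ^ k := by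
  refine ⟨2 ^ k * (Finset.Iic (k, 0)).sup (fun m => SchwartzMap.seminorm ℝ m.1 m.2) f,
    by positivity, fun x => ?_⟩
  rw [le_div_iff₀ (by positivity), mul_comm]
  simpa [norm_iteratedFDeriv_zero] using
    SchwartzMap.one_add_le_sup_seminorm_apply (𝕜 := ℝ) (m := (k, 0)) le_rfl le_rfl f x

lemma taylor1 {f f' : ℝ → ℂ} {s : Set ℝ} {C : ℝ} (hconv : Convex ℝ s)
    (hf : ∀ z ∈ s, HasDerivWithinAt f (f' z) s z) {c : ℂ}
    (bound : ∀ z ∈ s, ‖f' z - c‖ ≤ C) {x y : ℝ} (xs : x ∈ s) (ys : y ∈ s) :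
    ‖f y - f x - (y - x) • c‖ ≤ C * ‖y - x‖ := by
  have hg : ∀ z ∈ s, HasDerivWithinAt (fun z : ℝ => f z - z • c) (f' z - c) s z := by
    intro z hz
    have h1 : HasDerivAt (fun z : ℝ => z • c) ((1:ℝ) • c) z := (hasDerivAt_id z).smul_const c
    have h := (hf z hz).sub (h1.hasDerivWithinAt)
    rw [one_smul] at h
    exact h
  have := hconv.norm_image_sub_le_of_norm_hasDerivWithin_le hg bound xs ys
  have heq : f y - y • c - (f x - x • c) = f y - f x - (y - x) • c := by
    rw [sub_smul]; abel
  rwa [heq] at this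

lemma summable_inv_sq : Summable (fun j : ℕ => 1 / ((j : ℝ) + 1) ^ 2) := by
  have := (summable_nat_add_iff (f := fun n : ℕ => 1 / (n : ℝ) ^ 2) 1).2
    ((Real.summable_one_div_nat_pow).2 one_lt_two)
  simpa [add_comm] using this

set_option maxHeartbeats 1000000 in
lemma summable_aux (f : SchwartzMap ℝ ℂ) (c : ℕ → ℂ) (y : ℕ → ℝ) (s B : ℝ)
    (hs : 0 < s) (hB : 0 ≤ B) (hy0 : ∀ j, 0 ≤ y j)
    (hy : ∀ j : ℕ, s * ((j : ℝ) + 1) ≤ 1 + y j)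
    (hc : ∀ j, ‖c j‖ ≤ B * ((j : ℝ) + 1) ^ 4) :
    Summable (fun j => c j * f (y j)) := by
  obtain ⟨C, hC0, hC⟩ := schwartz_decay_bound f 6
  apply Summable.of_norm
  refine Summable.of_nonneg_of_le (fun j => norm_nonneg _) (fun j => ?_)
    (summable_inv_sq.mul_left (B * C / s ^ 6))
  have ht : (1 : ℝ) ≤ (j : ℝ) + 1 := by linarith [Nat.cast_nonneg (α := ℝ) j]
  have ht0 : (0 : ℝ) < (j : ℝ) + 1 := by positivity
  have h1 : ‖f (y j)‖ ≤ C / (s * ((j : ℝ) + 1)) ^ 6 := by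
    refine (hC (y j)).trans ?_
    apply div_le_div_of_nonneg_left hC0 (by positivity)
    calc (s * ((j : ℝ) + 1)) ^ 6 ≤ (1 + y j) ^ 6 := by
          apply pow_le_pow_left₀ (by positivity) (hy j)
      _ ≤ (1 + ‖y j‖) ^ 6 := by
          apply pow_le_pow_left₀ (by linarith [hy0 j])
          simp [Real.norm_eq_abs, abs_of_nonneg (hy0 j)]
  calc ‖c j * f (y j)‖ = ‖c j‖ * ‖f (y j)‖ := norm_mul _ _
    _ ≤ (B * ((j : ℝ) + 1) ^ 4) * (C / (s * ((j : ℝ) + 1)) ^ 6) := by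
        exact mul_le_mul (hc j) h1 (norm_nonneg _) (by positivity)
    _ = B * C / s ^ 6 * (1 / ((j : ℝ) + 1) ^ 2) := by
        field_simp

set_option maxHeartbeats 2000000

/-- Smoothed spectral density for the magnetic Laplacian on the sphere of radius `R`. -/
noncomputable def Ysphere (R : ℝ) (φ : SchwartzMap ℝ ℂ) (N : ℕ) : ℂ :=
  ∑' j : ℕ, ((N : ℂ) + 2 * (j : ℂ) + 1) *
    φ ((1 / R ^ 2) * ((j : ℝ) * ((j : ℝ) + 1) / N + (2 * (j : ℝ) + 1) / 2))

/-- `Y_N(φ) = f_0(φ)N + f_1(φ) + O(N^{-1})` with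
`f_1(φ) = (1/R²) Σ_j φ'((2j+1)/(2R²)) j(j+1) + Σ_j φ((2j+1)/(2R²))(2j+1)`. -/
theorem stmt9 (R : ℝ) (hR : 0 < R) (φ : SchwartzMap ℝ ℂ) :
    ∃ C : ℝ, ∀ N : ℕ, 1 ≤ N →
      ‖Ysphere R φ N -
          ((∑' j : ℕ, φ ((2 * (j : ℝ) + 1) / (2 * R ^ 2))) * (N : ℂ) +
            ((1 / (R : ℂ) ^ 2) *
                ∑' j : ℕ, deriv (fun x : ℝ => φ x) ((2 * (j : ℝ) + 1) / (2 * R ^ 2)) *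
                  ((j : ℂ) * ((j : ℂ) + 1)) +
              ∑' j : ℕ, φ ((2 * (j : ℝ) + 1) / (2 * R ^ 2)) * (2 * (j : ℂ) + 1)))‖ ≤
        C / N := by
  have hR2 : (0:ℝ) < R ^ 2 := by positivity
  have hRC : ((R : ℂ)) ^ 2 ≠ 0 := by
    simpa using pow_ne_zero 2 (Complex.ofReal_ne_zero.2 hR.ne')
  set ψ : SchwartzMap ℝ ℂ := SchwartzMap.derivCLM ℝ ℂ φ with hψdef
  set χ : SchwartzMap ℝ ℂ := SchwartzMap.derivCLM ℝ ℂ ψ with hχdef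
  have hψ : ∀ y : ℝ, deriv (fun x : ℝ => φ x) y = ψ y := fun y =>
    (SchwartzMap.derivCLM_apply (𝕜 := ℝ) φ y).symm
  have hχ : ∀ y : ℝ, deriv (fun x : ℝ => ψ x) y = χ y := fun y =>
    (SchwartzMap.derivCLM_apply (𝕜 := ℝ) ψ y).symm
  obtain ⟨C1, hC10, hC1⟩ := schwartz_decay_bound ψ 6
  obtain ⟨C2, hC20, hC2⟩ := schwartz_decay_bound χ 6
  set s : ℝ := min 1 (1 / R ^ 2) with hsdef
  have hs : 0 < s := lt_min one_pos (by positivity)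
  have hs1 : s ≤ 1 := min_le_left _ _
  have hs2 : s ≤ 1 / R ^ 2 := min_le_right _ _
  set K : ℝ := C2 / (R ^ 4 * s ^ 6) + 2 * C1 / (R ^ 2 * s ^ 6) with hKdef
  have hK : 0 ≤ K := by positivity
  set S : ℝ := ∑' j : ℕ, 1 / ((j : ℝ) + 1) ^ 2 with hSdef
  have hS0 : 0 ≤ S := tsum_nonneg (fun j => by positivity)
  refine ⟨K * S, fun N hN => ?_⟩
  have hN0 : (0:ℝ) < (N : ℝ) := by exact_mod_cast hN
  -- abbreviations
  set xj : ℕ → ℝ := fun j => (2 * (j : ℝ) + 1) / (2 * R ^ 2) with hxjdef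
  set aj : ℕ → ℝ := fun j =>
    (1 / R ^ 2) * ((j : ℝ) * ((j : ℝ) + 1) / N + (2 * (j : ℝ) + 1) / 2) with hajdef
  set dj : ℕ → ℝ := fun j => (j : ℝ) * ((j : ℝ) + 1) / (N * R ^ 2) with hdjdef
  have haj : ∀ j, aj j = xj j + dj j := by
    intro j; simp only [hajdef, hxjdef, hdjdef]
    field_simp
    ring
  have hxj0 : ∀ j, 0 ≤ xj j := by intro j; simp only [hxjdef]; positivity
  have hdj0 : ∀ j, 0 ≤ dj j := by intro j; simp only [hdjdef]; positivity
  have hsx : ∀ j : ℕ, s * ((j : ℝ) + 1) ≤ 1 + xj j := by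
    intro j
    have hj0 : (0:ℝ) ≤ (j : ℝ) := Nat.cast_nonneg j
    have h1 : s * (j : ℝ) ≤ (1 / R ^ 2) * (j : ℝ) := mul_le_mul_of_nonneg_right hs2 hj0
    have ht0 : (0:ℝ) ≤ 1 / (2 * R ^ 2) := by positivity
    have hh : 1 / R ^ 2 = 2 * (1 / (2 * R ^ 2)) := by field_simp
    have h2 : (1 / R ^ 2) * (j : ℝ) ≤ xj j := by
      simp only [hxjdef, div_eq_mul_one_div (2 * (j:ℝ) + 1) (2 * R ^ 2)]
      nlinarith
    nlinarith
  have hsa : ∀ j : ℕ, s * ((j : ℝ) + 1) ≤ 1 + aj j := by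
    intro j
    have := haj j
    have := hdj0 j
    have := hsx j
    linarith
  have haj0 : ∀ j, 0 ≤ aj j := by
    intro j
    have := haj j; have := hdj0 j; have := hxj0 j; linarith
  -- coefficient norm facts
  have hcoefY : ∀ j : ℕ, ‖(N : ℂ) + 2 * (j : ℂ) + 1‖ ≤ ((N : ℝ) + 2) * ((j : ℝ) + 1) ^ 4 := by
    intro j
    have he : ((N : ℂ) + 2 * (j : ℂ) + 1) = (((N : ℝ) + 2 * (j : ℝ) + 1 : ℝ) : ℂ) := by
      push_cast; ring
    rw [he, Complex.norm_real, Real.norm_eq_abs, abs_of_nonneg (by positivity)]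
    have hj1 : (1:ℝ) ≤ (j : ℝ) + 1 := by linarith [Nat.cast_nonneg (α := ℝ) j]
    have h4 : ((j : ℝ) + 1) ≤ ((j : ℝ) + 1) ^ 4 := le_self_pow₀ hj1 (by norm_num)
    nlinarith [Nat.cast_nonneg (α := ℝ) j]
  have hcoefB : ∀ j : ℕ, ‖(j : ℂ) * ((j : ℂ) + 1)‖ ≤ 1 * ((j : ℝ) + 1) ^ 4 := by
    intro j
    have he : ((j : ℂ) * ((j : ℂ) + 1)) = (((j : ℝ) * ((j : ℝ) + 1) : ℝ) : ℂ) := by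
      push_cast; ring
    rw [he, Complex.norm_real, Real.norm_eq_abs, abs_of_nonneg (by positivity)]
    nlinarith [Nat.cast_nonneg (α := ℝ) j, sq_nonneg ((j:ℝ) + 1), sq_nonneg ((j:ℝ)*((j:ℝ)+1))]
  have hcoefD : ∀ j : ℕ, ‖(2 * (j : ℂ) + 1)‖ ≤ 1 * ((j : ℝ) + 1) ^ 4 := by
    intro j
    have he : (2 * (j : ℂ) + 1) = (((2 * (j : ℝ) + 1) : ℝ) : ℂ) := by push_cast; ring
    rw [he, Complex.norm_real, Real.norm_eq_abs, abs_of_nonneg (by positivity)]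
    have hj1 : (1:ℝ) ≤ (j : ℝ) + 1 := by linarith [Nat.cast_nonneg (α := ℝ) j]
    have h4 : ((j : ℝ) + 1) ^ 2 ≤ ((j : ℝ) + 1) ^ 4 := pow_le_pow_right₀ hj1 (by norm_num)
    nlinarith [Nat.cast_nonneg (α := ℝ) j]
  -- summability
  have hsumY : Summable (fun j : ℕ => ((N : ℂ) + 2 * (j : ℂ) + 1) * φ (aj j)) :=
    summable_aux φ _ aj s ((N : ℝ) + 2) hs (by positivity) haj0 hsa hcoefY
  have hsumA : Summable (fun j : ℕ => φ (xj j)) := by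
    have hc1 : ∀ j : ℕ, ‖(1:ℂ)‖ ≤ 1 * ((j : ℝ) + 1) ^ 4 := by
      intro j
      have hj1 : (1:ℝ) ≤ (j : ℝ) + 1 := by linarith [Nat.cast_nonneg (α := ℝ) j]
      simpa using one_le_pow₀ hj1
    simpa using summable_aux φ (fun _ => (1:ℂ)) xj s 1 hs zero_le_one hxj0 hsx hc1
  have hsumB : Summable (fun j : ℕ => ((j : ℂ) * ((j : ℂ) + 1)) * ψ (xj j)) :=
    summable_aux ψ _ xj s 1 hs zero_le_one hxj0 hsx hcoefB
  have hsumD : Summable (fun j : ℕ => (2 * (j : ℂ) + 1) * φ (xj j)) :=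
    summable_aux φ _ xj s 1 hs zero_le_one hxj0 hsx hcoefD
  have hsumD' : Summable (fun j : ℕ => φ (xj j) * (2 * (j : ℂ) + 1)) :=
    hsumD.congr (fun j => mul_comm _ _)
  have hsumB' : Summable
      (fun j : ℕ => deriv (fun t : ℝ => φ t) (xj j) * ((j : ℂ) * ((j : ℂ) + 1))) :=
    hsumB.congr (fun j => by rw [hψ (xj j)]; ring)
  have hNC : ((N : ℂ)) ≠ 0 := Nat.cast_ne_zero.2 (by omega)
  set fY : ℕ → ℂ := fun j => ((N : ℂ) + 2 * (j : ℂ) + 1) * φ (aj j) with hfYdef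
  set T : ℕ → ℂ := fun j => φ (xj j) * (N : ℂ)
      + ((1 / (R : ℂ) ^ 2) * (deriv (fun t : ℝ => φ t) (xj j) * ((j : ℂ) * ((j : ℂ) + 1)))
        + φ (xj j) * (2 * (j : ℂ) + 1)) with hTdef
  have hsumT : Summable T :=
    (hsumA.mul_right (N : ℂ)).add ((hsumB'.mul_left (1 / (R : ℂ) ^ 2)).add hsumD')
  -- per-term bound
  have hbound : ∀ j : ℕ, ‖fY j - T j‖ ≤ K / N * (1 / ((j : ℝ) + 1) ^ 2) := by
    intro j
    simp only [hfYdef, hTdef]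
    have hj0 : (0:ℝ) ≤ (j : ℝ) := Nat.cast_nonneg j
    have hu1 : (1:ℝ) ≤ (j : ℝ) + 1 := by linarith
    set x : ℝ := xj j with hxd
    set d : ℝ := dj j with hdd
    set a : ℝ := aj j with had
    have hd_eq : d = (j : ℝ) * ((j : ℝ) + 1) / (N * R ^ 2) := rfl
    have hNd : (N : ℂ) * (d : ℂ) = (1 / (R : ℂ) ^ 2) * ((j : ℂ) * ((j : ℂ) + 1)) := by
      rw [hd_eq]
      push_cast
      field_simp
    have hax : a = x + d := haj j
    have hd0 : 0 ≤ d := hdj0 j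
    have hx0 : 0 ≤ x := hxj0 j
    have hxmem : x ∈ Set.Icc x a := ⟨le_refl x, by linarith⟩
    have hamem : a ∈ Set.Icc x a := ⟨by linarith, le_refl a⟩
    set u : ℝ := (j : ℝ) + 1 with hud
    have hsu : 0 < s * u := by positivity
    have hIb : ∀ z ∈ Set.Icc x a, s * u ≤ 1 + z := by
      intro z hz
      have hA1 := hsx j
      have hA2 := hz.1
      rw [← hxd, ← hud] at hA1
      linarith
    have hψb : ∀ z ∈ Set.Icc x a, ‖ψ z‖ ≤ C1 / (s * u) ^ 6 := by
      intro z hz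
      have hz0 : 0 ≤ z := le_trans hx0 hz.1
      refine (hC1 z).trans ?_
      apply div_le_div_of_nonneg_left hC10 (by positivity)
      calc (s * u) ^ 6 ≤ (1 + z) ^ 6 := pow_le_pow_left₀ hsu.le (hIb z hz) 6
        _ = (1 + ‖z‖) ^ 6 := by rw [Real.norm_eq_abs, abs_of_nonneg hz0]
    have hχb : ∀ z ∈ Set.Icc x a, ‖χ z‖ ≤ C2 / (s * u) ^ 6 := by
      intro z hz
      have hz0 : 0 ≤ z := le_trans hx0 hz.1
      refine (hC2 z).trans ?_
      apply div_le_div_of_nonneg_left hC20 (by positivity)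
      calc (s * u) ^ 6 ≤ (1 + z) ^ 6 := pow_le_pow_left₀ hsu.le (hIb z hz) 6
        _ = (1 + ‖z‖) ^ 6 := by rw [Real.norm_eq_abs, abs_of_nonneg hz0]
    have hφd : ∀ z ∈ Set.Icc x a, HasDerivWithinAt (fun t : ℝ => φ t) (ψ z) (Set.Icc x a) z := by
      intro z _
      have h := (φ.differentiable.differentiableAt (x := z)).hasDerivAt
      rw [← hψ z]
      exact h.hasDerivWithinAt
    have hψd : ∀ z ∈ Set.Icc x a, HasDerivWithinAt (fun t : ℝ => ψ t) (χ z) (Set.Icc x a) z := by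
      intro z _
      have h := (ψ.differentiable.differentiableAt (x := z)).hasDerivAt
      rw [← hχ z]
      exact h.hasDerivWithinAt
    have hnorm_ax : ‖a - x‖ = d := by
      rw [hax, Real.norm_eq_abs]
      rw [show x + d - x = d by ring, abs_of_nonneg hd0]
    have hrem1 : ‖φ a - φ x‖ ≤ C1 / (s * u) ^ 6 * d := by
      have h := (convex_Icc x a).norm_image_sub_le_of_norm_hasDerivWithin_le hφd hψb hxmem hamem
      rwa [hnorm_ax] at h
    have hψlip : ∀ z ∈ Set.Icc x a, ‖ψ z - ψ x‖ ≤ C2 / (s * u) ^ 6 * d := by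
      intro z hz
      have h := (convex_Icc x a).norm_image_sub_le_of_norm_hasDerivWithin_le hψd hχb hxmem hz
      refine h.trans ?_
      have hzd : ‖z - x‖ ≤ d := by
        rw [Real.norm_eq_abs, abs_of_nonneg (by linarith [hz.1])]
        have := hz.2
        linarith [hax]
      exact mul_le_mul_of_nonneg_left hzd (by positivity)
    have hrem2 : ‖φ a - φ x - (d : ℂ) * ψ x‖ ≤ C2 / (s * u) ^ 6 * d * d := by
      have h := taylor1 (convex_Icc x a) hφd (c := ψ x) hψlip hxmem hamem
      rw [hnorm_ax, show a - x = d by rw [hax]; ring, Complex.real_smul] at h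
      linarith [h]
    have hid : ((N : ℂ) + 2 * (j : ℂ) + 1) * φ a
        - (φ x * (N : ℂ)
          + ((1 / (R : ℂ) ^ 2) * (deriv (fun t : ℝ => φ t) x * ((j : ℂ) * ((j : ℂ) + 1)))
            + φ x * (2 * (j : ℂ) + 1)))
        = (N : ℂ) * (φ a - φ x - (d : ℂ) * ψ x) + (2 * (j : ℂ) + 1) * (φ a - φ x) := by
      rw [hψ x]
      linear_combination (ψ x : ℂ) * hNd
    have hnorm2j : ‖(2 * (j : ℂ) + 1)‖ ≤ 2 * u := by
      have he : (2 * (j : ℂ) + 1) = (((2 * (j : ℝ) + 1) : ℝ) : ℂ) := by push_cast; ring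
      rw [he, Complex.norm_real, Real.norm_eq_abs, abs_of_nonneg (by positivity), hud]
      linarith
    have hNnorm : ‖((N : ℂ))‖ = (N : ℝ) := by
      simp
    set D : ℝ := u ^ 2 / (N * R ^ 2) with hDd
    have hdD : d ≤ D := by
      rw [hd_eq, hDd, hud]
      gcongr
      nlinarith
    have hD0 : 0 ≤ D := by positivity
    have hu0 : (0:ℝ) < u := by linarith
    have h1 : (N : ℝ) * (C2 / (s * u) ^ 6 * d * d) ≤ (N : ℝ) * (C2 / (s * u) ^ 6 * D * D) := by
      have hM2 : 0 ≤ C2 / (s * u) ^ 6 := by positivity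
      have := mul_le_mul (mul_le_mul_of_nonneg_left hdD hM2) hdD hd0
        (by positivity)
      nlinarith
    have h1e : (N : ℝ) * (C2 / (s * u) ^ 6 * D * D) = C2 / (R ^ 4 * s ^ 6) / N * (1 / u ^ 2) := by
      rw [hDd]
      field_simp
    have h2 : 2 * u * (C1 / (s * u) ^ 6 * d) ≤ 2 * u * (C1 / (s * u) ^ 6 * D) := by
      have hM1 : 0 ≤ C1 / (s * u) ^ 6 := by positivity
      have := mul_le_mul_of_nonneg_left hdD hM1
      nlinarith
    have h2e : 2 * u * (C1 / (s * u) ^ 6 * D) = 2 * C1 / (R ^ 2 * s ^ 6) / N * (1 / u ^ 3) := by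
      rw [hDd]
      field_simp
    have h3 : 2 * C1 / (R ^ 2 * s ^ 6) / N * (1 / u ^ 3)
        ≤ 2 * C1 / (R ^ 2 * s ^ 6) / N * (1 / u ^ 2) := by
      apply mul_le_mul_of_nonneg_left _ (by positivity)
      apply one_div_le_one_div_of_le (by positivity)
      nlinarith
    have hfin : C2 / (R ^ 4 * s ^ 6) / N * (1 / u ^ 2)
        + 2 * C1 / (R ^ 2 * s ^ 6) / N * (1 / u ^ 2) = K / N * (1 / u ^ 2) := by
      rw [hKdef]
      ring
    calc ‖((N : ℂ) + 2 * (j : ℂ) + 1) * φ a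
        - (φ x * (N : ℂ)
          + ((1 / (R : ℂ) ^ 2) * (deriv (fun t : ℝ => φ t) x * ((j : ℂ) * ((j : ℂ) + 1)))
            + φ x * (2 * (j : ℂ) + 1)))‖
        = ‖(N : ℂ) * (φ a - φ x - (d : ℂ) * ψ x) + (2 * (j : ℂ) + 1) * (φ a - φ x)‖ := by
          rw [hid]
      _ ≤ ‖(N : ℂ)‖ * ‖φ a - φ x - (d : ℂ) * ψ x‖ + ‖(2 * (j : ℂ) + 1)‖ * ‖φ a - φ x‖ := by
          refine (norm_add_le _ _).trans ?_
          rw [norm_mul, norm_mul]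
      _ ≤ (N : ℝ) * (C2 / (s * u) ^ 6 * d * d) + (2 * u) * (C1 / (s * u) ^ 6 * d) := by
          rw [hNnorm]
          refine add_le_add (mul_le_mul_of_nonneg_left hrem2 hN0.le) ?_
          exact mul_le_mul hnorm2j hrem1 (norm_nonneg _) (by positivity)
      _ ≤ K / N * (1 / u ^ 2) := by linarith
  -- assembling the sums
  have hnormsum : Summable (fun j : ℕ => ‖fY j - T j‖) :=
    Summable.of_nonneg_of_le (fun j => norm_nonneg _) hbound (summable_inv_sq.mul_left (K / N))
  have hYeq : Ysphere R φ N = ∑' j : ℕ, fY j := by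
    rw [Ysphere]
  have htsumT : ∑' j, T j
      = (∑' j : ℕ, φ ((2 * (j : ℝ) + 1) / (2 * R ^ 2))) * (N : ℂ) +
          ((1 / (R : ℂ) ^ 2) *
              ∑' j : ℕ, deriv (fun x : ℝ => φ x) ((2 * (j : ℝ) + 1) / (2 * R ^ 2)) *
                ((j : ℂ) * ((j : ℂ) + 1)) +
            ∑' j : ℕ, φ ((2 * (j : ℝ) + 1) / (2 * R ^ 2)) * (2 * (j : ℂ) + 1)) := by
    rw [hTdef]
    rw [Summable.tsum_add (hsumA.mul_right _) ((hsumB'.mul_left _).add hsumD'),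
      Summable.tsum_add (hsumB'.mul_left _) hsumD', tsum_mul_right, tsum_mul_left]
  rw [← htsumT, hYeq, ← Summable.tsum_sub hsumY hsumT]
  calc ‖∑' j : ℕ, (fY j - T j)‖ ≤ ∑' j : ℕ, ‖fY j - T j‖ := norm_tsum_le_tsum_norm hnormsum
    _ ≤ ∑' j : ℕ, K / N * (1 / ((j : ℝ) + 1) ^ 2) :=
        Summable.tsum_le_tsum hbound hnormsum (summable_inv_sq.mul_left (K / N))
    _ = K / N * S := by rw [tsum_mul_left, hSdef]
    _ = K * S / N := by ring
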